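/- Every pointed finitely complete category which satisfies the triangular lemma is anticommutative. -/

import Mathlib

open CategoryTheory CategoryTheory.Limits

universe v u

variable {C : Type u} [Category.{v} C]

/-- Two morphisms `f : X ⟶ Z` and `g : Y ⟶ Z` in a pointed category are *disjoint*
if whenever `x ≫ f = y ≫ g` then both composites are zero. -/
def CategoryTheory.AreDisjoint [HasZeroMorphisms C]
    {X Y Z : C} (f : X ⟶ Z) (g : Y ⟶ Z) : Prop :=
  ∀ ⦃S : C⦄ (x : S ⟶ X) (y : S ⟶ Y), x ≫ f = y ≫ g → x ≫ f = 0 ∧ y ≫ g = 0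

/-- Two morphisms `f : X ⟶ Z` and `g : Y ⟶ Z` *commute in the sense of Huq* if there
is a cooperator `ρ : X ⨯ Y ⟶ Z` restricting to `f` and `g` along the product inclusions. -/
def CategoryTheory.HuqCommute [HasZeroMorphisms C] [HasBinaryProducts C]
    {X Y Z : C} (f : X ⟶ Z) (g : Y ⟶ Z) : Prop :=
  ∃ ρ : X ⨯ Y ⟶ Z, prod.lift (𝟙 X) 0 ≫ ρ = f ∧ prod.lift 0 (𝟙 Y) ≫ ρ = g

/-- A pointed category with binary products is *anticommutative* if every pair of
commuting morphisms is disjoint. -/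
def CategoryTheory.Anticommutative (C : Type u) [Category.{v} C]
    [HasZeroMorphisms C] [HasBinaryProducts C] : Prop :=
  ∀ ⦃X Y Z : C⦄ (f : X ⟶ Z) (g : Y ⟶ Z), HuqCommute f g → AreDisjoint f g

/-- For an internal relation represented by `r : R₀ ⟶ X ⨯ X` and morphisms
`x, y : S ⟶ X`, `x R y` means `⟨x, y⟩` factors through `r`. -/
def CategoryTheory.RelFactors [HasBinaryProducts C] {R₀ X : C} (r : R₀ ⟶ X ⨯ X)
    {S : C} (x y : S ⟶ X) : Prop :=
  ∃ u : S ⟶ R₀, u ≫ r = prod.lift x y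

/-- `r : R₀ ⟶ X ⨯ X` represents an internal equivalence relation on `X`:
it is a monomorphism and the induced relation on generalized elements is reflexive,
symmetric and transitive. -/
structure CategoryTheory.IsInternalEquivalence [HasBinaryProducts C] {R₀ X : C}
    (r : R₀ ⟶ X ⨯ X) : Prop where
  mono : Mono r
  refl : ∀ ⦃S : C⦄ (x : S ⟶ X), RelFactors r x x
  symm : ∀ ⦃S : C⦄ (x y : S ⟶ X), RelFactors r x y → RelFactors r y x
  trans : ∀ ⦃S : C⦄ (x y z : S ⟶ X),
    RelFactors r x y → RelFactors r y z → RelFactors r x z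

/-- A category with binary products satisfies the *triangular lemma* if for all internal
equivalence relations `R, S, T` on an object `X` with `R ∩ S ≤ T`, whenever
`x R y`, `y S z` and `x T z`, then `y T z`. -/
def CategoryTheory.SatisfiesTriangularLemma (C : Type u) [Category.{v} C]
    [HasBinaryProducts C] : Prop :=
  ∀ ⦃X R₀ S₀ T₀ : C⦄ (r : R₀ ⟶ X ⨯ X) (s : S₀ ⟶ X ⨯ X) (t : T₀ ⟶ X ⨯ X),
    IsInternalEquivalence r → IsInternalEquivalence s → IsInternalEquivalence t →
    (∀ ⦃W : C⦄ (x y : W ⟶ X), RelFactors r x y → RelFactors s x y → RelFactors t x y) →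
    ∀ ⦃W : C⦄ (x y z : W ⟶ X),
      RelFactors r x y → RelFactors s y z → RelFactors t x z → RelFactors t y z

/-- The kernel relation of `f : A ⟶ B`, as a subobject of `A ⨯ A`. -/
noncomputable def CategoryTheory.kerRel [HasFiniteLimits C] {A B : C} (f : A ⟶ B) :
    equalizer (prod.fst ≫ f) ((prod.snd : A ⨯ A ⟶ A) ≫ f) ⟶ A ⨯ A :=
  equalizer.ι _ _

lemma CategoryTheory.kerRel_factors_iff [HasFiniteLimits C] {A B : C} (f : A ⟶ B)
    {S : C} (x y : S ⟶ A) : RelFactors (kerRel f) x y ↔ x ≫ f = y ≫ f := by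
  constructor
  · rintro ⟨u, hu⟩
    have key : prod.lift x y ≫ prod.fst ≫ f = prod.lift x y ≫ prod.snd ≫ f := by
      rw [← hu]
      simp only [Category.assoc]
      congr 1
      exact equalizer.condition _ _
    rw [← Category.assoc, ← Category.assoc, prod.lift_fst, prod.lift_snd] at key; exact key
  · intro hxy
    refine ⟨equalizer.lift (prod.lift x y) ?_, equalizer.lift_ι _ _⟩
    rw [← Category.assoc, ← Category.assoc, prod.lift_fst, prod.lift_snd]; exact hxy

lemma CategoryTheory.kerRel_isInternalEquivalence [HasFiniteLimits C] {A B : C}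
    (f : A ⟶ B) : IsInternalEquivalence (kerRel f) where
  mono := by rw [kerRel]; infer_instance
  refl := fun S x => (kerRel_factors_iff f x x).2 rfl
  symm := fun S x y hxy => (kerRel_factors_iff f y x).2 ((kerRel_factors_iff f x y).1 hxy).symm
  trans := fun S x y z hxy hyz => (kerRel_factors_iff f x z).2
    (((kerRel_factors_iff f x y).1 hxy).trans ((kerRel_factors_iff f y z).1 hyz))

/-- Every pointed finitely complete category satisfying the triangular lemma is
anticommutative. -/
theorem anticommutative_of_triangular [HasZeroObject C] [HasZeroMorphisms C]
    [HasFiniteLimits C] (h : SatisfiesTriangularLemma C) :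
    Anticommutative C := by
  rintro X Y Z f g ⟨ρ, hf, hg⟩ S x y hxy
  -- relations on X ⨯ Y
  have hR := kerRel_isInternalEquivalence (prod.snd : X ⨯ Y ⟶ Y)
  have hS := kerRel_isInternalEquivalence (prod.fst : X ⨯ Y ⟶ X)
  have hT := kerRel_isInternalEquivalence ρ
  have hsub : ∀ ⦃W : C⦄ (a b : W ⟶ X ⨯ Y),
      RelFactors (kerRel (prod.snd : X ⨯ Y ⟶ Y)) a b →
      RelFactors (kerRel (prod.fst : X ⨯ Y ⟶ X)) a b →
      RelFactors (kerRel ρ) a b := by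
    intro W a b h1 h2
    rw [kerRel_factors_iff] at h1 h2 ⊢
    have : a = b := prod.hom_ext h2 h1
    rw [this]
  have key := h _ _ _ (kerRel_isInternalEquivalence (prod.snd : X ⨯ Y ⟶ Y))
    (kerRel_isInternalEquivalence (prod.fst : X ⨯ Y ⟶ X))
    (kerRel_isInternalEquivalence ρ) hsub
    (prod.lift x 0) (prod.lift 0 0) (prod.lift 0 y) ?_ ?_ ?_
  · rw [kerRel_factors_iff] at key
    have h0 : (prod.lift (0 : S ⟶ X) (0 : S ⟶ Y)) = 0 := by
      apply Limits.prod.hom_ext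
      · rw [prod.lift_fst, zero_comp]
      · rw [prod.lift_snd, zero_comp]
    rw [h0, zero_comp] at key
    have hgy : prod.lift (0 : S ⟶ X) y ≫ ρ = y ≫ g := by
      rw [← hg, ← Category.assoc]
      congr 1
      apply Limits.prod.hom_ext <;> simp
    rw [hgy] at key
    exact ⟨hxy.trans key.symm, key.symm⟩
  · rw [kerRel_factors_iff, prod.lift_snd, prod.lift_snd]
  · rw [kerRel_factors_iff, prod.lift_fst, prod.lift_fst]
  · rw [kerRel_factors_iff]
    have hfx : prod.lift x (0 : S ⟶ Y) ≫ ρ = x ≫ f := by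
      rw [← hf, ← Category.assoc]
      congr 1
      apply Limits.prod.hom_ext <;> simp
    have hgy : prod.lift (0 : S ⟶ X) y ≫ ρ = y ≫ g := by
      rw [← hg, ← Category.assoc]
      congr 1
      apply Limits.prod.hom_ext <;> simp
    rw [hfx, hgy]; exact hxy
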